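/- Define positive integers a_j, b_j by a₁ := 1, b_j := 2^{d_j} a_j, a_{j+1} := 2^j b_j, where (d_j)_{j≥1} is a strictly increasing sequence of positive integers with (2/A)^{d_j} ≤ 2^{-(j/2+1)} for a fixed real A > 2. Define quotients μ by μ_{a₁} := 2, μ_k := A^{i+1} μ_{a_j} for 2^i a_j < k ≤ 2^{i+1} a_j (0 ≤ i ≤ d_j−1), and μ_k := 2^{1/(2·2^i b_j)} μ_{k−1} for 2^i b_j < k ≤ 2^{i+1} b_j (0 ≤ i ≤ j−1). Then a_j/μ_{a_j} ≤ 2^{−j} for all j ≥ 1. -/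

import Mathlib

open Filter

/-- A weight function: non-decreasing on `[0,∞)`, non-negative, tending to `+∞`. -/
def IsWeight (ω : ℝ → ℝ) : Prop :=
  (∀ t, 0 ≤ ω t) ∧ MonotoneOn ω (Set.Ici (0 : ℝ)) ∧ Tendsto ω atTop atTop

/-- Property `P(ω,γ)`: there is `K > 1` with `limsup_{t→∞} ω(K^γ t)/ω(t) < K`. -/
def PropP (ω : ℝ → ℝ) (γ : ℝ) : Prop :=
  ∃ K : ℝ, 1 < K ∧ limsup (fun t => ω (K ^ γ * t) / ω t) atTop < K

/-- The growth index `γ(ω) = sup {γ > 0 : P(ω,γ)} ∈ [0,∞]` (`0` if the set is empty). -/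
noncomputable def gammaIdx (ω : ℝ → ℝ) : ENNReal :=
  ⨆ γ ∈ {γ : ℝ | 0 < γ ∧ PropP ω γ}, ENNReal.ofReal γ

theorem quotient_estimate
(A : ℝ) (hA : 2 < A)
    (a b d : ℕ → ℕ) (μ : ℕ → ℝ)
    (hd : StrictMonoOn d (Set.Ici 1)) (hd1 : 1 ≤ d 1)
    (hdgrow : ∀ j ≥ 1, (2 / A) ^ (d j) ≤ 1 / (2 : ℝ) ^ ((j : ℝ) / 2 + 1))
    (ha1 : a 1 = 1)
    (hb : ∀ j ≥ 1, b j = 2 ^ (d j) * a j)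
    (ha : ∀ j ≥ 1, a (j + 1) = 2 ^ j * b j)
    (hμa1 : μ (a 1) = 2)
    (hblock1 : ∀ j ≥ 1, ∀ i < d j, ∀ k, 2 ^ i * a j < k → k ≤ 2 ^ (i + 1) * a j →
      μ k = A ^ (i + 1) * μ (a j))
    (hblock2 : ∀ j ≥ 1, ∀ i < j, ∀ k, 2 ^ i * b j < k → k ≤ 2 ^ (i + 1) * b j →
      μ k = (2 : ℝ) ^ ((1 : ℝ) / (2 * 2 ^ i * (b j : ℝ))) * μ (k - 1)) :
    ∀ j ≥ 1, (a j : ℝ) / μ (a j) ≤ 1 / 2 ^ j := by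
  have hA0 : (0:ℝ) < A := by linarith
  -- positivity of a
  have hapos : ∀ j, 1 ≤ j → 1 ≤ a j := by
    intro j
    induction j with
    | zero => omega
    | succ n ih =>
      intro _
      rcases Nat.eq_zero_or_pos n with h | h
      · subst h; simp [ha1]
      · rw [ha n h, hb n h]
        have h1 := ih h
        have h2 : 0 < 2 ^ n := Nat.pow_pos (by norm_num)
        have h3 : 0 < 2 ^ (d n) := Nat.pow_pos (by norm_num)
        exact Nat.one_le_iff_ne_zero.mpr (by positivity)
  have hdpos : ∀ j ≥ 1, 1 ≤ d j := by
    intro j hj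
    rcases eq_or_lt_of_le hj with h | h
    · rw [← h]; exact hd1
    · exact hd1.trans (hd (Set.mem_Ici.mpr le_rfl) (Set.mem_Ici.mpr hj) h).le
  have hbpos : ∀ j ≥ 1, 1 ≤ b j := by
    intro j hj
    rw [hb j hj]
    have := hapos j hj
    exact Nat.one_le_iff_ne_zero.mpr (by positivity)
  -- value of μ at b j
  have hμb : ∀ j ≥ 1, μ (b j) = A ^ (d j) * μ (a j) := by
    intro j hj
    have hdj := hdpos j hj
    have h1 : d j - 1 < d j := by omega
    have he : d j - 1 + 1 = d j := by omega
    have hlt : 2 ^ (d j - 1) * a j < b j := by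
      rw [hb j hj]
      exact Nat.mul_lt_mul_of_lt_of_le (Nat.pow_lt_pow_right (by norm_num) h1)
        (le_refl _) (by have := hapos j hj; omega)
    have hle' : b j ≤ 2 ^ (d j - 1 + 1) * a j := by rw [he, hb j hj]
    have := hblock1 j hj (d j - 1) h1 (b j) hlt hle'
    rwa [he] at this
  -- single block doubling
  have hstep : ∀ j ≥ 1, ∀ i < j,
      μ (2 ^ (i + 1) * b j) = (2:ℝ) ^ ((1:ℝ)/2) * μ (2 ^ i * b j) := by
    intro j hj i hij
    have hB : 1 ≤ 2 ^ i * b j := by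
      have := hbpos j hj
      have h2 : 0 < 2 ^ i := Nat.pow_pos (by norm_num)
      exact Nat.one_le_iff_ne_zero.mpr (by positivity)
    have hBR : (0:ℝ) < ((2 ^ i * b j : ℕ) : ℝ) := by exact_mod_cast hB
    have hdouble : 2 ^ (i + 1) * b j = 2 ^ i * b j + 2 ^ i * b j := by ring
    have claim : ∀ n, n ≤ 2 ^ i * b j →
        μ (2 ^ i * b j + n)
          = (2:ℝ) ^ ((n : ℝ) / (2 * ((2 ^ i * b j : ℕ) : ℝ))) * μ (2 ^ i * b j) := by
      intro n
      induction n with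
      | zero => intro _; simp
      | succ n ih =>
        intro hn
        have h2 := hblock2 j hj i hij (2 ^ i * b j + (n + 1)) (by omega) (by omega)
        have hsub : 2 ^ i * b j + (n + 1) - 1 = 2 ^ i * b j + n := by omega
        rw [hsub] at h2
        rw [h2, ih (by omega), ← mul_assoc, ← Real.rpow_add (by norm_num : (0:ℝ) < 2)]
        have hbne : (b j : ℝ) ≠ 0 := by
          have := hbpos j hj
          positivity
        have hexp : (1:ℝ) / (2 * 2 ^ i * (b j : ℝ)) + (n : ℝ) / (2 * ((2 ^ i * b j : ℕ) : ℝ))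
            = ((n + 1 : ℕ) : ℝ) / (2 * ((2 ^ i * b j : ℕ) : ℝ)) := by
          push_cast
          have h2ine : (2:ℝ) ^ i ≠ 0 := by positivity
          field_simp
          ring
        rw [hexp]
    have := claim (2 ^ i * b j) le_rfl
    rw [← hdouble] at this
    rw [this]
    have hhalf : (((2 ^ i * b j : ℕ) : ℝ)) / (2 * ((2 ^ i * b j : ℕ) : ℝ)) = (1:ℝ) / 2 := by
      rw [div_eq_div_iff (by linarith) (by norm_num)]
      ring
    rw [hhalf]
  -- iterated doubling
  have hμ2 : ∀ j ≥ 1, ∀ i ≤ j, μ (2 ^ i * b j) = (2:ℝ) ^ ((i : ℝ) / 2) * μ (b j) := by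
    intro j hj i
    induction i with
    | zero => intro _; simp
    | succ i ih =>
      intro hi
      rw [hstep j hj i (by omega), ih (by omega), ← mul_assoc,
        ← Real.rpow_add (by norm_num : (0:ℝ) < 2)]
      congr 1
      push_cast
      ring
  -- value of μ at a (j+1)
  have hμa' : ∀ j ≥ 1, μ (a (j + 1)) = (2:ℝ) ^ ((j : ℝ) / 2) * (A ^ (d j) * μ (a j)) := by
    intro j hj
    rw [ha j hj, hμ2 j hj j le_rfl, hμb j hj]
  -- main induction
  have main : ∀ j, 1 ≤ j → 0 < μ (a j) ∧ (a j : ℝ) / μ (a j) ≤ 1 / 2 ^ j := by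
    intro j
    induction j with
    | zero => omega
    | succ n ih =>
      intro _
      rcases Nat.eq_zero_or_pos n with h | h
      · subst h
        simp only [Nat.zero_add]
        rw [hμa1, ha1]
        norm_num
      · obtain ⟨hpos, hle⟩ := ih h
        have hμeq := hμa' n h
        have hT : (0:ℝ) < (2:ℝ) ^ ((n : ℝ) / 2) := Real.rpow_pos_of_pos (by norm_num) _
        have hApow : (0:ℝ) < A ^ (d n) := pow_pos hA0 _
        have hμne : μ (a n) ≠ 0 := hpos.ne'
        have hT2 : (2:ℝ) ^ ((n : ℝ) / 2) * (2:ℝ) ^ ((n : ℝ) / 2) = (2:ℝ) ^ n := by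
          rw [← Real.rpow_add (by norm_num : (0:ℝ) < 2), ← Real.rpow_natCast 2 n]
          congr 1
          ring
        refine ⟨by rw [hμeq]; positivity, ?_⟩
        have key : (a (n + 1) : ℝ) / μ (a (n + 1))
            = (2 / A) ^ (d n) * ((2:ℝ) ^ ((n : ℝ) / 2) * ((a n : ℝ) / μ (a n))) := by
          rw [hμeq, ha n h, hb n h]
          push_cast
          rw [div_pow, ← hT2]
          field_simp
        rw [key]
        have h1 : (2 / A) ^ (d n) ≤ 1 / (2:ℝ) ^ ((n : ℝ) / 2 + 1) := hdgrow n h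
        have hca : (0:ℝ) ≤ (a n : ℝ) := by positivity
        calc (2 / A) ^ (d n) * ((2:ℝ) ^ ((n : ℝ) / 2) * ((a n : ℝ) / μ (a n)))
            ≤ (1 / (2:ℝ) ^ ((n : ℝ) / 2 + 1)) * ((2:ℝ) ^ ((n : ℝ) / 2) * (1 / 2 ^ n)) := by
              apply mul_le_mul h1
                (mul_le_mul_of_nonneg_left hle hT.le)
                (mul_nonneg hT.le (div_nonneg hca hpos.le))
                (by positivity)
          _ = 1 / 2 ^ (n + 1) := by
              rw [Real.rpow_add (by norm_num : (0:ℝ) < 2), Real.rpow_one, pow_succ]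
              field_simp
  intro j hj
  exact (main j hj).2
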